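/- Let f : ℝ → ℝ be C¹ with f' < 0 everywhere (so the Engquist–Osher flux is F(a,b) = f(b)), and let A : ℝ → ℝ be nondecreasing and Lipschitz. Then the semi-discrete scheme d/dt u_j = −(f(u_{j+1}) − f(u_j))/Δx + (A(u_{j+1}) − 2A(u_j) + A(u_{j−1}))/Δx² is monotone: if u, v are two solutions (in ℓ∞ ∩ ℓ¹) with u_j(0) ≤ v_j(0) for all j, then u_j(t) ≤ v_j(t) for all j and all t ≥ 0. -/

import Mathlib

set_option maxHeartbeats 1000000

open Filter Topology Set
set_option maxHeartbeats 1000000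

private lemma finite_large_of_summable {g : ℤ → ℝ} (hg : Summable fun j => |g j|)
    {c : ℝ} (hc : 0 < c) : {j : ℤ | c ≤ |g j|}.Finite := by
  have h := hg.tendsto_cofinite_zero (Iio_mem_nhds hc)
  rw [mem_map, Filter.mem_cofinite] at h
  refine h.subset fun j hj => ?_
  simp only [Set.mem_compl_iff, Set.mem_preimage, Set.mem_Iio, not_lt]
  exact hj

private lemma nonneg_of_hasDerivAt_left {φ : ℝ → ℝ} {a d : ℝ} (ha : 0 < a)
    (hd : HasDerivAt φ d a) (h : ∀ t ∈ Set.Ioo (0:ℝ) a, φ t ≤ φ a) : 0 ≤ d := by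
  have hs : Tendsto (slope φ a) (𝓝[<] a) (𝓝 d) :=
    (hasDerivAt_iff_tendsto_slope.mp hd).mono_left
      (nhdsWithin_mono a fun x hx => ne_of_lt hx)
  refine ge_of_tendsto hs ?_
  filter_upwards [Ioo_mem_nhdsLT_of_mem ⟨ha, le_refl a⟩] with t ht
  have h1 : φ t - φ a ≤ 0 := sub_nonpos.mpr (h t ht)
  have h2 : t - a ≤ 0 := by linarith [ht.2]
  rw [slope_def_field]
  exact div_nonneg_of_nonpos h1 h2



/-- `u` solves the semi-discrete scheme
`d/dt u_j = −(f(u_{j+1}) − f(u_j))/Δx + (A(u_{j+1}) − 2A(u_j) + A(u_{j−1}))/Δx²`,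
and is bounded (ℓ∞) with summable (ℓ¹) profile at each time. -/
def SolvesScheme (f A : ℝ → ℝ) (Δx : ℝ) (u : ℝ → ℤ → ℝ) : Prop :=
  (∀ j : ℤ, ∀ t : ℝ,
    HasDerivAt (fun s => u s j)
      (-(f (u t (j + 1)) - f (u t j)) / Δx +
        (A (u t (j + 1)) - 2 * A (u t j) + A (u t (j - 1))) / Δx ^ 2) t) ∧
  (∃ B : ℝ, ∀ t : ℝ, ∀ j : ℤ, |u t j| ≤ B) ∧
  (∀ t : ℝ, Summable fun j : ℤ => |u t j|)

theorem stmt11 (f A : ℝ → ℝ) (Δx : ℝ) (hΔx : 0 < Δx)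
    (hf : ContDiff ℝ 1 f) (hf' : ∀ x, deriv f x < 0)
    (hA : Monotone A) (LA : NNReal) (hALip : LipschitzWith LA A)
    (u v : ℝ → ℤ → ℝ)
    (hu : SolvesScheme f A Δx u) (hv : SolvesScheme f A Δx v)
    (h0 : ∀ j, u 0 j ≤ v 0 j) :
    ∀ t ≥ (0 : ℝ), ∀ j, u t j ≤ v t j := by
  obtain ⟨hud, ⟨Bu, hBu⟩, hsu⟩ := hu
  obtain ⟨hvd, ⟨Bv, hBv⟩, hsv⟩ := hv
  obtain ⟨B, hBdef⟩ : ∃ B : ℝ, B = |Bu| + |Bv| := ⟨_, rfl⟩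
  have hB0 : 0 ≤ B := by rw [hBdef]; positivity
  have hub : ∀ t j, |u t j| ≤ B := fun t j => (hBu t j).trans
    (by rw [hBdef]; exact (le_abs_self Bu).trans (le_add_of_nonneg_right (abs_nonneg _)))
  have hvb : ∀ t j, |v t j| ≤ B := fun t j => (hBv t j).trans
    (by rw [hBdef]; exact (le_abs_self Bv).trans (le_add_of_nonneg_left (abs_nonneg _)))
  have hΔ2 : (0:ℝ) < Δx ^ 2 := by positivity
  have hanti : Antitone f := (strictAnti_of_deriv_neg hf').antitone
  -- bound on f over [-B, B]
  obtain ⟨Mf0, hMf0⟩ := (isCompact_Icc : IsCompact (Icc (-B) B)).exists_bound_of_continuousOn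
    hf.continuous.continuousOn
  obtain ⟨Mf, hMfdef⟩ : ∃ Mf : ℝ, Mf = max Mf0 0 := ⟨_, rfl⟩
  have hMfnn : 0 ≤ Mf := hMfdef ▸ le_max_right _ _
  have hMf : ∀ x : ℝ, |x| ≤ B → |f x| ≤ Mf := by
    intro x hx
    have hmem : x ∈ Icc (-B) B := ⟨(abs_le.mp hx).1, (abs_le.mp hx).2⟩
    exact le_trans (by simpa [Real.norm_eq_abs] using hMf0 x hmem) (hMfdef ▸ le_max_left _ _)
  -- Lipschitz bound on f over [-R, R], R = 3B+1
  obtain ⟨R, hRdef⟩ : ∃ R : ℝ, R = 3 * B + 1 := ⟨_, rfl⟩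
  have hfd : Differentiable ℝ f := hf.differentiable one_ne_zero
  obtain ⟨Lf0, hLf0⟩ := (isCompact_Icc : IsCompact (Icc (-R) R)).exists_bound_of_continuousOn
    (hf.continuous_deriv le_rfl).continuousOn
  obtain ⟨Lf, hLfdef⟩ : ∃ Lf : ℝ, Lf = max Lf0 0 := ⟨_, rfl⟩
  have hLfnn : 0 ≤ Lf := hLfdef ▸ le_max_right _ _
  have hLf : ∀ x ∈ Icc (-R) R, ∀ y ∈ Icc (-R) R, |f y - f x| ≤ Lf * |y - x| := by
    intro x hx y hy
    have := Convex.norm_image_sub_le_of_norm_hasDerivWithin_le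
      (f := f) (f' := deriv f) (s := Icc (-R) R) (C := Lf)
      (fun z _ => (hfd z).hasDerivAt.hasDerivWithinAt)
      (fun z hz => le_trans (by simpa [Real.norm_eq_abs] using hLf0 z hz)
        (hLfdef ▸ le_max_left _ _))
      (convex_Icc _ _) hx hy
    simpa [Real.norm_eq_abs] using this
  -- bound on A over [-B, B]
  obtain ⟨MA, hMAdef⟩ : ∃ MA : ℝ, MA = |A 0| + (LA : ℝ) * B := ⟨_, rfl⟩
  have hMAnn : 0 ≤ MA := by rw [hMAdef]; positivity
  have hAb : ∀ x : ℝ, |x| ≤ B → |A x| ≤ MA := by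
    intro x hx
    have h1 : |A x - A 0| ≤ (LA : ℝ) * |x - 0| := by
      simpa [Real.dist_eq] using hALip.dist_le_mul x 0
    have h2 : (LA : ℝ) * |x - 0| ≤ (LA : ℝ) * B := by
      have : |x - 0| ≤ B := by simpa using hx
      exact mul_le_mul_of_nonneg_left this LA.2
    calc |A x| = |(A x - A 0) + A 0| := by ring_nf
      _ ≤ |A x - A 0| + |A 0| := abs_add_le _ _
      _ ≤ (LA : ℝ) * B + |A 0| := by linarith
      _ = MA := by rw [hMAdef]; ring
  -- uniform bound on the scheme RHS
  obtain ⟨K, hKdef⟩ : ∃ K : ℝ, K = 2 * Mf / Δx + 4 * MA / Δx ^ 2 := ⟨_, rfl⟩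
  have hKnn : 0 ≤ K := by
    rw [hKdef]
    exact add_nonneg (div_nonneg (by linarith) hΔx.le) (div_nonneg (by linarith) hΔ2.le)
  have hGb : ∀ (y : ℝ → ℤ → ℝ), (∀ t k, |y t k| ≤ B) → ∀ t (j : ℤ),
      |(-(f (y t (j + 1)) - f (y t j)) / Δx +
        (A (y t (j + 1)) - 2 * A (y t j) + A (y t (j - 1))) / Δx ^ 2)| ≤ K := by
    intro y hy t j
    have h1 : |f (y t (j+1)) - f (y t j)| ≤ 2 * Mf := by
      calc |f (y t (j+1)) - f (y t j)| ≤ |f (y t (j+1))| + |f (y t j)| := abs_sub _ _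
        _ ≤ Mf + Mf := add_le_add (hMf _ (hy t _)) (hMf _ (hy t _))
        _ = 2 * Mf := by ring
    have h2 : |A (y t (j+1)) - 2 * A (y t j) + A (y t (j-1))| ≤ 4 * MA := by
      have b1 := abs_le.mp (hAb _ (hy t (j+1)))
      have b2 := abs_le.mp (hAb _ (hy t j))
      have b3 := abs_le.mp (hAb _ (hy t (j-1)))
      rw [abs_le]; constructor <;> nlinarith
    calc |(-(f (y t (j + 1)) - f (y t j)) / Δx +
        (A (y t (j + 1)) - 2 * A (y t j) + A (y t (j - 1))) / Δx ^ 2)|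
        ≤ |(-(f (y t (j + 1)) - f (y t j)) / Δx)| +
          |(A (y t (j + 1)) - 2 * A (y t j) + A (y t (j - 1))) / Δx ^ 2| := abs_add_le _ _
      _ = |f (y t (j+1)) - f (y t j)| / Δx +
          |A (y t (j + 1)) - 2 * A (y t j) + A (y t (j - 1))| / Δx ^ 2 := by
          rw [abs_div, abs_div, abs_neg, abs_of_pos hΔx, abs_of_pos hΔ2]
      _ ≤ 2 * Mf / Δx + 4 * MA / Δx ^ 2 := by gcongr
      _ = K := hKdef.symm
  -- w is Lipschitz in time with constant 2K
  have hwL : ∀ (j : ℤ) (s t : ℝ), |(u t j - v t j) - (u s j - v s j)| ≤ 2 * K * |t - s| := by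
    intro j s t
    have := Convex.norm_image_sub_le_of_norm_hasDerivWithin_le
      (f := fun r => u r j - v r j)
      (f' := fun r => (-(f (u r (j + 1)) - f (u r j)) / Δx +
          (A (u r (j + 1)) - 2 * A (u r j) + A (u r (j - 1))) / Δx ^ 2) -
        (-(f (v r (j + 1)) - f (v r j)) / Δx +
          (A (v r (j + 1)) - 2 * A (v r j) + A (v r (j - 1))) / Δx ^ 2))
      (s := univ) (C := 2 * K)
      (fun r _ => ((hud j r).sub (hvd j r)).hasDerivWithinAt)
      (fun r _ => by
        have b1 := hGb u hub r j
        have b2 := hGb v hvb r j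
        have := abs_sub ((-(f (u r (j + 1)) - f (u r j)) / Δx +
          (A (u r (j + 1)) - 2 * A (u r j) + A (u r (j - 1))) / Δx ^ 2))
          ((-(f (v r (j + 1)) - f (v r j)) / Δx +
          (A (v r (j + 1)) - 2 * A (v r j) + A (v r (j - 1))) / Δx ^ 2))
        simp only [Real.norm_eq_abs]
        linarith)
      convex_univ (mem_univ s) (mem_univ t)
    simpa [Real.norm_eq_abs] using this
  -- constants for the Gronwall-type argument
  have hLArnn : (0:ℝ) ≤ (LA : ℝ) := LA.2
  obtain ⟨L1, hL1def⟩ : ∃ L1 : ℝ, L1 = Lf / Δx + 2 * (LA : ℝ) / Δx ^ 2 := ⟨_, rfl⟩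
  have hL1nn : 0 ≤ L1 := by
    rw [hL1def]
    exact add_nonneg (div_nonneg hLfnn hΔx.le) (div_nonneg (by linarith) hΔ2.le)
  obtain ⟨C, hCdef⟩ : ∃ C : ℝ, C = L1 + 1 := ⟨_, rfl⟩
  have hCpos : 0 < C := by rw [hCdef]; linarith
  -- the key claim
  have key : ∀ T, 0 ≤ T → ∀ ε : ℝ, 0 < ε → ∀ t ∈ Icc (0:ℝ) T, ∀ j : ℤ,
      u t j - v t j < ε * Real.exp (C * t) := by
    intro T hT ε hε
    have hexp : ∀ s : ℝ, HasDerivAt (fun r => ε * Real.exp (C * r))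
        (C * (ε * Real.exp (C * s))) s := by
      intro s
      have h1 : HasDerivAt (fun r : ℝ => C * r) C s := by
        simpa using (hasDerivAt_id s).const_mul C
      have h2 : HasDerivAt (fun r : ℝ => Real.exp (C * r)) (Real.exp (C * s) * C) s := by
        simpa [Function.comp_def] using (Real.hasDerivAt_exp (C * s)).comp s h1
      have h3 := h2.const_mul ε
      rw [show C * (ε * Real.exp (C * s)) = ε * (Real.exp (C * s) * C) by ring]
      exact h3
    by_contra hcon
    push_neg at hcon
    obtain ⟨t1, ht1, j1, hj1⟩ := hcon
    obtain ⟨S, hSdef⟩ : ∃ S : Set ℝ,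
        S = {t | t ∈ Icc (0:ℝ) T ∧ ∃ j : ℤ, ε * Real.exp (C * t) ≤ u t j - v t j} := ⟨_, rfl⟩
    have hSmem : ∀ t, t ∈ S ↔ (t ∈ Icc (0:ℝ) T ∧ ∃ j : ℤ,
        ε * Real.exp (C * t) ≤ u t j - v t j) := fun t => by rw [hSdef]; rfl
    have hS_ne : S.Nonempty := ⟨t1, (hSmem t1).mpr ⟨ht1, j1, hj1⟩⟩
    have hS_bdd : BddBelow S := ⟨0, fun s hs => ((hSmem s).mp hs).1.1⟩
    obtain ⟨t₀, ht₀def⟩ : ∃ t₀ : ℝ, t₀ = sInf S := ⟨_, rfl⟩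
    have ht₀S : ∀ s ∈ S, t₀ ≤ s := fun s hs => ht₀def ▸ csInf_le hS_bdd hs
    have ht₀0 : 0 ≤ t₀ := ht₀def ▸ le_csInf hS_ne fun s hs => ((hSmem s).mp hs).1.1
    have ht₀T : t₀ ≤ T := by
      obtain ⟨s, hs⟩ := hS_ne
      exact (ht₀S s hs).trans ((hSmem s).mp hs).1.2
    have hbefore : ∀ t, 0 ≤ t → t < t₀ → ∀ j : ℤ, u t j - v t j < ε * Real.exp (C * t) := by
      intro t h0t htt j
      by_contra h
      push_neg at h
      exact absurd (ht₀S t ((hSmem t).mpr ⟨⟨h0t, htt.le.trans ht₀T⟩, j, h⟩)) (not_le.mpr htt)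
    obtain ⟨c0, hc0def⟩ : ∃ c0 : ℝ, c0 = ε * Real.exp (C * t₀) := ⟨_, rfl⟩
    have hc0 : 0 < c0 := by rw [hc0def]; positivity
    -- finite set of candidate indices
    obtain ⟨F, hFdef⟩ : ∃ F : Set ℤ,
        F = {j : ℤ | c0/4 ≤ |u t₀ j|} ∪ {j : ℤ | c0/4 ≤ |v t₀ j|} := ⟨_, rfl⟩
    have hF : F.Finite := by
      rw [hFdef]
      exact (finite_large_of_summable (hsu t₀) (by positivity)).union
        (finite_large_of_summable (hsv t₀) (by positivity))
    -- approximate attainment at t₀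
    have hδstep : ∀ δ : ℝ, 0 < δ → δ ≤ c0 / (2 * (2 * K + 1)) →
        ∃ j ∈ F, c0 - 2 * K * δ ≤ u t₀ j - v t₀ j := by
      intro δ hδ0 hδ1
      have hex : ∃ s ∈ S, s < t₀ + δ := by
        by_contra h
        push_neg at h
        have h2 := le_csInf hS_ne h
        rw [← ht₀def] at h2
        linarith
      obtain ⟨s, hsS, hs⟩ := hex
      obtain ⟨⟨hs0T, -⟩, j, hj⟩ := (hSmem s).mp hsS
      have hts : t₀ ≤ s := ht₀S s hsS
      have habs : |t₀ - s| ≤ δ := by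
        rw [abs_sub_comm, abs_of_nonneg (by linarith)]
        linarith
      have hLip' := abs_le.mp (hwL j s t₀)
      have hKd : 2 * K * |t₀ - s| ≤ 2 * K * δ :=
        mul_le_mul_of_nonneg_left habs (by linarith)
      have hexps : ε * Real.exp (C * t₀) ≤ ε * Real.exp (C * s) := by
        have : C * t₀ ≤ C * s := mul_le_mul_of_nonneg_left hts hCpos.le
        exact mul_le_mul_of_nonneg_left (Real.exp_le_exp.mpr this) hε.le
      have hw0 : c0 - 2 * K * δ ≤ u t₀ j - v t₀ j := by
        have h5 : -(2 * K * |t₀ - s|) ≤ u t₀ j - v t₀ j - (u s j - v s j) := hLip'.1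
        rw [hc0def]
        linarith
      refine ⟨j, ?_, hw0⟩
      have hKd2 : 2 * K * δ ≤ c0 / 2 := by
        have h1 : 2 * K * δ ≤ 2 * K * (c0 / (2 * (2 * K + 1))) :=
          mul_le_mul_of_nonneg_left hδ1 (by linarith)
        have h2 : 2 * K * (c0 / (2 * (2 * K + 1))) ≤ c0 / 2 := by
          rw [← mul_div_assoc, div_le_div_iff₀ (by linarith) (by norm_num : (0:ℝ) < 2)]
          nlinarith
        linarith
      have hw2 : c0 / 2 ≤ u t₀ j - v t₀ j := by linarith
      have hsum : c0 / 2 ≤ |u t₀ j| + |v t₀ j| := by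
        have h1 := le_abs_self (u t₀ j)
        have h2 := neg_abs_le (v t₀ j)
        linarith
      rw [hFdef]
      rcases le_or_gt (c0/4) |u t₀ j| with h | h
      · exact Or.inl h
      · exact Or.inr (by simp only [Set.mem_setOf_eq]; linarith)
    -- maximizer over F
    have hδ₁pos : 0 < c0 / (2 * (2 * K + 1)) := div_pos hc0 (by linarith)
    have hFne : F.Nonempty := by
      obtain ⟨j, hj, -⟩ := hδstep _ hδ₁pos le_rfl
      exact ⟨j, hj⟩
    obtain ⟨j₀, hj₀F, hj₀max'⟩ := Set.Finite.exists_maximalFor (fun j => u t₀ j - v t₀ j) F hF hFne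
    have hj₀max : ∀ j ∈ F, u t₀ j - v t₀ j ≤ u t₀ j₀ - v t₀ j₀ := by
      intro j hj
      rcases le_or_gt (u t₀ j - v t₀ j) (u t₀ j₀ - v t₀ j₀) with h | h
      · exact h
      · exact hj₀max' hj h.le
    -- attainment from below : c0 ≤ w t₀ j₀
    have hatt : c0 ≤ u t₀ j₀ - v t₀ j₀ := by
      by_contra h
      push_neg at h
      obtain ⟨δ, hδdef⟩ : ∃ δ : ℝ, δ = min (c0 / (2 * (2 * K + 1)))
        ((c0 - (u t₀ j₀ - v t₀ j₀)) / (2 * K + 1)) := ⟨_, rfl⟩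
      have hδ0 : 0 < δ := hδdef ▸ lt_min hδ₁pos (div_pos (by linarith) (by linarith))
      obtain ⟨j, hjF, hjw⟩ := hδstep δ hδ0 (hδdef ▸ min_le_left _ _)
      have h1 : u t₀ j - v t₀ j ≤ u t₀ j₀ - v t₀ j₀ := hj₀max j hjF
      have h2 : 2 * K * δ ≤ 2 * K * ((c0 - (u t₀ j₀ - v t₀ j₀)) / (2 * K + 1)) :=
        mul_le_mul_of_nonneg_left (hδdef ▸ min_le_right _ _) (by linarith)
      have h3 : 2 * K * ((c0 - (u t₀ j₀ - v t₀ j₀)) / (2 * K + 1)) <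
          c0 - (u t₀ j₀ - v t₀ j₀) := by
        rw [← mul_div_assoc, div_lt_iff₀ (by linarith : (0:ℝ) < 2 * K + 1)]
        nlinarith
      linarith
    -- t₀ is positive
    have ht₀pos : 0 < t₀ := by
      rcases ht₀0.lt_or_eq with h | h
      · exact h
      · exfalso
        have h1 := h0 j₀
        have h2 : c0 = ε := by rw [hc0def, ← h, mul_zero, Real.exp_zero, mul_one]
        rw [← h] at hatt
        linarith [hatt, h2 ▸ hc0]
    -- upper bound at t₀ by left continuity
    have hwle : ∀ k : ℤ, u t₀ k - v t₀ k ≤ c0 := by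
      intro k
      have hder := ((hud k t₀).sub (hvd k t₀)).sub (hexp t₀)
      have hcont : Tendsto (fun t => u t k - v t k - ε * Real.exp (C * t)) (𝓝[<] t₀)
          (𝓝 (u t₀ k - v t₀ k - ε * Real.exp (C * t₀))) :=
        hder.continuousAt.continuousWithinAt
      have hle : u t₀ k - v t₀ k - ε * Real.exp (C * t₀) ≤ 0 := by
        refine le_of_tendsto hcont ?_
        filter_upwards [Ioo_mem_nhdsLT_of_mem ⟨ht₀pos, le_refl t₀⟩] with t ht
        linarith [hbefore t ht.1.le ht.2 k]
      rw [hc0def]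
      linarith
    have hweq : u t₀ j₀ - v t₀ j₀ = c0 := le_antisymm (hwle j₀) hatt
    -- the key monotonicity estimate on the scheme difference
    have hGest :
        (-(f (u t₀ (j₀ + 1)) - f (u t₀ j₀)) / Δx +
          (A (u t₀ (j₀ + 1)) - 2 * A (u t₀ j₀) + A (u t₀ (j₀ - 1))) / Δx ^ 2) -
        (-(f (v t₀ (j₀ + 1)) - f (v t₀ j₀)) / Δx +
          (A (v t₀ (j₀ + 1)) - 2 * A (v t₀ j₀) + A (v t₀ (j₀ - 1))) / Δx ^ 2)
        ≤ L1 * c0 := by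
      have hm2B : c0 ≤ 2 * B := by
        have b1 := abs_le.mp (hub t₀ j₀)
        have b2 := abs_le.mp (hvb t₀ j₀)
        linarith [hweq]
      have hda : u t₀ (j₀ + 1) ≤ v t₀ (j₀ + 1) + c0 := by linarith [hwle (j₀ + 1)]
      have haa : u t₀ (j₀ - 1) ≤ v t₀ (j₀ - 1) + c0 := by linarith [hwle (j₀ - 1)]
      have hba : u t₀ j₀ = v t₀ j₀ + c0 := by linarith [hweq]
      -- memberships in Icc (-R) R
      have hmem1 : v t₀ (j₀ + 1) ∈ Icc (-R) R := by
        have := abs_le.mp (hvb t₀ (j₀ + 1))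
        rw [hRdef]
        constructor <;> [linarith; linarith]
      have hmem2 : v t₀ (j₀ + 1) + c0 ∈ Icc (-R) R := by
        have := abs_le.mp (hvb t₀ (j₀ + 1))
        rw [hRdef]
        constructor <;> [linarith; linarith]
      -- piece 1 : flux part
      have p1 : f (u t₀ j₀) ≤ f (v t₀ j₀) := hanti (by linarith)
      have p2 : f (v t₀ (j₀ + 1) + c0) ≤ f (u t₀ (j₀ + 1)) := hanti hda
      have p3 : |f (v t₀ (j₀ + 1) + c0) - f (v t₀ (j₀ + 1))| ≤ Lf * c0 := by
        have := hLf _ hmem1 _ hmem2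
        rwa [add_sub_cancel_left, abs_of_pos hc0] at this
      have p4 : f (v t₀ (j₀ + 1)) - Lf * c0 ≤ f (u t₀ (j₀ + 1)) := by
        have := abs_le.mp p3
        linarith
      -- piece 2 : diffusion part
      have hALipR : ∀ x : ℝ, |A (x + c0) - A x| ≤ (LA : ℝ) * c0 := by
        intro x
        have := hALip.dist_le_mul (x + c0) x
        rw [Real.dist_eq, Real.dist_eq, add_sub_cancel_left, abs_of_pos hc0] at this
        exact this
      have q1 : A (u t₀ (j₀ + 1)) ≤ A (v t₀ (j₀ + 1)) + (LA : ℝ) * c0 := by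
        have h1 : A (u t₀ (j₀ + 1)) ≤ A (v t₀ (j₀ + 1) + c0) := hA hda
        have h2 := abs_le.mp (hALipR (v t₀ (j₀ + 1)))
        linarith
      have q2 : A (u t₀ (j₀ - 1)) ≤ A (v t₀ (j₀ - 1)) + (LA : ℝ) * c0 := by
        have h1 : A (u t₀ (j₀ - 1)) ≤ A (v t₀ (j₀ - 1) + c0) := hA haa
        have h2 := abs_le.mp (hALipR (v t₀ (j₀ - 1)))
        linarith
      have q3 : A (v t₀ j₀) ≤ A (u t₀ j₀) := hA (by linarith)
      -- assemble
      have e1 : -(f (u t₀ (j₀ + 1)) - f (u t₀ j₀)) / Δx ≤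
          (-(f (v t₀ (j₀ + 1)) - f (v t₀ j₀)) + Lf * c0) / Δx := by
        have hnum : -(f (u t₀ (j₀ + 1)) - f (u t₀ j₀)) ≤
            -(f (v t₀ (j₀ + 1)) - f (v t₀ j₀)) + Lf * c0 := by linarith
        gcongr
      have e2 : (A (u t₀ (j₀ + 1)) - 2 * A (u t₀ j₀) + A (u t₀ (j₀ - 1))) / Δx ^ 2 ≤
          ((A (v t₀ (j₀ + 1)) - 2 * A (v t₀ j₀) + A (v t₀ (j₀ - 1))) + 2 * (LA : ℝ) * c0) /
            Δx ^ 2 := by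
        have hnum : A (u t₀ (j₀ + 1)) - 2 * A (u t₀ j₀) + A (u t₀ (j₀ - 1)) ≤
            (A (v t₀ (j₀ + 1)) - 2 * A (v t₀ j₀) + A (v t₀ (j₀ - 1))) + 2 * (LA : ℝ) * c0 := by
          linarith
        gcongr
      have e1' := e1.trans_eq (add_div _ _ Δx)
      have e2' := e2.trans_eq (add_div _ _ (Δx ^ 2))
      have efin : L1 * c0 = Lf * c0 / Δx + 2 * (LA : ℝ) * c0 / Δx ^ 2 := by
        rw [hL1def]
        field_simp
      linarith [e1', e2', efin]
    -- derivative of the crossing function at t₀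
    have hder : HasDerivAt (fun t => u t j₀ - v t j₀ - ε * Real.exp (C * t))
        ((-(f (u t₀ (j₀ + 1)) - f (u t₀ j₀)) / Δx +
          (A (u t₀ (j₀ + 1)) - 2 * A (u t₀ j₀) + A (u t₀ (j₀ - 1))) / Δx ^ 2) -
        (-(f (v t₀ (j₀ + 1)) - f (v t₀ j₀)) / Δx +
          (A (v t₀ (j₀ + 1)) - 2 * A (v t₀ j₀) + A (v t₀ (j₀ - 1))) / Δx ^ 2) -
        C * (ε * Real.exp (C * t₀))) t₀ := ((hud j₀ t₀).sub (hvd j₀ t₀)).sub (hexp t₀)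
    have hzero : u t₀ j₀ - v t₀ j₀ - ε * Real.exp (C * t₀) = 0 := by
      rw [← hc0def]
      linarith [hweq]
    have hnn := nonneg_of_hasDerivAt_left ht₀pos hder (fun t ht => by
      have h1 := hbefore t ht.1.le ht.2 j₀
      show u t j₀ - v t j₀ - ε * Real.exp (C * t) ≤
        u t₀ j₀ - v t₀ j₀ - ε * Real.exp (C * t₀)
      linarith)
    have hCc : C * (ε * Real.exp (C * t₀)) = L1 * c0 + c0 := by
      rw [← hc0def, hCdef]
      ring
    linarith [hGest, hnn, hc0, hCc]
  -- conclusion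
  intro t ht j
  by_contra hlt
  push_neg at hlt
  have hc : 0 < u t j - v t j := sub_pos.mpr hlt
  have hE : 0 < Real.exp (C * t) := Real.exp_pos _
  have hk := key t ht ((u t j - v t j) / (2 * Real.exp (C * t))) (by positivity) t ⟨ht, le_rfl⟩ j
  have heq : (u t j - v t j) / (2 * Real.exp (C * t)) * Real.exp (C * t) =
      (u t j - v t j) / 2 := by
    field_simp
  rw [heq] at hk
  linarith
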